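/- Let f(x) = Σ_{j=1}^k v_j e^{2πi f_j x} be a k-sparse exponential sum. Then there is a universal constant C such that for every Δ > 0 and every t ∈ ℝ: |f(t)|² ≤ C · ( Σ_{i=1}^{2k} |f(t + iΔ)|² + Σ_{i=1}^{2k} |f(t − iΔ)|² ). -/

import Mathlib

open Polynomial Finset

/-! Auxiliary: pigeonhole over an orthonormal basis of a subspace of ℂⁿ. -/

lemma exists_good_vector {n : ℕ} (hn : 0 < n) (W : Submodule ℂ (EuclideanSpace ℂ (Fin n))) :
    ∃ (l : Fin n) (q : EuclideanSpace ℂ (Fin n)) (s : ℝ), q ∈ W ∧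
      (Module.finrank ℂ W : ℝ) / n ≤ s ∧ q l = (s : ℂ) ∧ ∑ j, ‖q j‖ ^ 2 = s := by
  haveI : FiniteDimensional ℂ W := FiniteDimensional.finiteDimensional_submodule W
  haveI : Nonempty (Fin n) := Fin.pos_iff_nonempty.mp hn
  set d := Module.finrank ℂ W with hd
  let b : OrthonormalBasis (Fin d) ℂ W := stdOrthonormalBasis ℂ W
  set v : Fin d → EuclideanSpace ℂ (Fin n) := fun i => (b i : EuclideanSpace ℂ (Fin n)) with hv
  have hon : Orthonormal ℂ v := by
    rw [orthonormal_iff_ite]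
    intro i j
    have := b.orthonormal
    rw [orthonormal_iff_ite] at this
    simpa [v, ← Submodule.coe_inner] using this i j
  have hnormsq : ∀ x : EuclideanSpace ℂ (Fin n), ‖x‖ ^ 2 = ∑ j, ‖x j‖ ^ 2 := by
    intro x; rw [EuclideanSpace.norm_eq, Real.sq_sqrt]; positivity
  have htot : ∑ l : Fin n, (∑ i : Fin d, ‖v i l‖ ^ 2) = (d : ℝ) := by
    rw [Finset.sum_comm]
    have h1 : ∀ i : Fin d, ∑ l : Fin n, ‖v i l‖ ^ 2 = 1 := by
      intro i
      rw [← hnormsq, hon.1 i, one_pow]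
    rw [Finset.sum_congr rfl fun i _ => h1 i]
    simp
  have hpig : ∃ l : Fin n, (d : ℝ) / n ≤ ∑ i : Fin d, ‖v i l‖ ^ 2 := by
    have hne : (Finset.univ : Finset (Fin n)).Nonempty := univ_nonempty
    have hsum : ∑ _l : Fin n, (d : ℝ) / n ≤ ∑ l : Fin n, (∑ i : Fin d, ‖v i l‖ ^ 2) := by
      rw [htot, Finset.sum_const, card_univ, Fintype.card_fin, nsmul_eq_mul]
      rw [mul_div_cancel₀]
      exact_mod_cast hn.ne'
    obtain ⟨l, _, hl⟩ := Finset.exists_le_of_sum_le hne hsum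
    exact ⟨l, hl⟩
  obtain ⟨l, hl⟩ := hpig
  set s : ℝ := ∑ i : Fin d, ‖v i l‖ ^ 2 with hs
  set c : Fin d → ℂ := fun i => (starRingEnd ℂ) (v i l) with hc
  set q : EuclideanSpace ℂ (Fin n) := ∑ i : Fin d, c i • v i with hq
  have happ : q l = ∑ i : Fin d, c i * v i l := by
    rw [hq]; simp [WithLp.ofLp_sum]
  have hql : q l = (s : ℂ) := by
    rw [happ, hs]
    push_cast
    refine Finset.sum_congr rfl fun i _ => ?_
    rw [hc]
    simp only
    rw [Complex.conj_mul']
  refine ⟨l, q, s, ?_, hl, hql, ?_⟩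
  · exact Submodule.sum_mem W fun i _ => Submodule.smul_mem W _ (by simp [hv, SetLike.coe_mem])
  · have h2 : ∑ j, ‖q j‖ ^ 2 = ‖q‖ ^ 2 := (hnormsq q).symm
    have h3 : (inner ℂ q q : ℂ) = ∑ i : Fin d, (starRingEnd ℂ) (c i) * c i := hon.inner_sum c c univ
    have h4 : (inner ℂ q q : ℂ) = ((‖q‖ : ℂ)) ^ 2 := inner_self_eq_norm_sq_to_K q
    have h5 : ((‖q‖ : ℂ)) ^ 2 = ((s : ℂ)) := by
      rw [← h4, h3]
      push_cast [hs]
      refine Finset.sum_congr rfl fun i _ => ?_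
      rw [hc]
      simp only [Complex.conj_conj]
      rw [mul_comm, Complex.conj_mul']
    have h6 : ‖q‖ ^ 2 = s := by exact_mod_cast h5
    rw [h2, h6]

/-! Auxiliary: the subspace of coefficient vectors of `X·R·∏(X - zᵢ)`. -/

noncomputable def sparseL {k : ℕ} (z : Fin k → ℂ) :
    (Fin k → ℂ) →ₗ[ℂ] EuclideanSpace ℂ (Fin (2 * k)) where
  toFun r := WithLp.toLp 2 fun j =>
    (X * (∑ m : Fin k, C (r m) * X ^ (m : ℕ)) * ∏ i, (X - C (z i))).coeff ((j : ℕ) + 1)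
  map_add' r s := by
    ext j
    simp only [Pi.add_apply, map_add, add_mul, mul_add, Finset.sum_add_distrib, coeff_add]
    rfl
  map_smul' a r := by
    ext j
    have h1 : (∑ m : Fin k, C (a * r m) * X ^ (m : ℕ))
        = C a * ∑ m : Fin k, C (r m) * X ^ (m : ℕ) := by
      rw [Finset.mul_sum]
      refine Finset.sum_congr rfl fun m _ => by rw [map_mul]; ring
    have h2 : (X * (∑ m : Fin k, C (a * r m) * X ^ (m : ℕ)) * ∏ i, (X - C (z i)))
        = C a * (X * (∑ m : Fin k, C (r m) * X ^ (m : ℕ)) * ∏ i, (X - C (z i))) := by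
      rw [h1]; ring
    show (X * (∑ m : Fin k, C ((a • r) m) * X ^ (m : ℕ)) * ∏ i, (X - C (z i))).coeff ((j:ℕ)+1)
        = a * (X * (∑ m : Fin k, C (r m) * X ^ (m : ℕ)) * ∏ i, (X - C (z i))).coeff ((j:ℕ)+1)
    simp only [Pi.smul_apply, smul_eq_mul]
    rw [h2, coeff_C_mul]

lemma sparse_coeff_sum {k : ℕ} (r : Fin k → ℂ) (m₀ : Fin k) :
    (∑ m : Fin k, C (r m) * X ^ (m : ℕ)).coeff (m₀ : ℕ) = r m₀ := by
  rw [Polynomial.finset_sum_coeff]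
  simp only [coeff_C_mul, coeff_X_pow]
  simp [Fin.val_eq_val]

lemma monic_prodP {k : ℕ} (z : Fin k → ℂ) : (∏ i, (X - C (z i))).Monic :=
  monic_prod_of_monic _ _ fun i _ => monic_X_sub_C (z i)

lemma natDegree_prodP {k : ℕ} (z : Fin k → ℂ) : (∏ i, (X - C (z i))).natDegree = k := by
  rw [natDegree_prod_of_monic _ _ fun i _ => monic_X_sub_C (z i)]
  simp

lemma sparse_natDegree_le {k : ℕ} (hk : 0 < k) (z : Fin k → ℂ) (r : Fin k → ℂ) :
    (X * (∑ m : Fin k, C (r m) * X ^ (m : ℕ)) * ∏ i, (X - C (z i))).natDegree ≤ 2 * k := by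
  have hS : (∑ m : Fin k, C (r m) * X ^ (m : ℕ)).natDegree ≤ k - 1 := by
    refine natDegree_sum_le_of_forall_le _ _ fun m _ => ?_
    refine (natDegree_C_mul_le _ _).trans ?_
    rw [natDegree_X_pow]
    omega
  calc (X * (∑ m : Fin k, C (r m) * X ^ (m : ℕ)) * ∏ i, (X - C (z i))).natDegree
      ≤ (X * (∑ m : Fin k, C (r m) * X ^ (m : ℕ))).natDegree + (∏ i, (X - C (z i))).natDegree :=
        natDegree_mul_le
    _ ≤ (X : ℂ[X]).natDegree + (∑ m : Fin k, C (r m) * X ^ (m : ℕ)).natDegree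
          + (∏ i, (X - C (z i))).natDegree := by
        exact add_le_add_left natDegree_mul_le _
    _ ≤ 1 + (k - 1) + k := by
        rw [natDegree_X, natDegree_prodP]
        exact add_le_add (add_le_add le_rfl hS) le_rfl
    _ ≤ 2 * k := by omega

lemma sparseL_injective {k : ℕ} (hk : 0 < k) (z : Fin k → ℂ) :
    Function.Injective (sparseL z) := by
  rw [injective_iff_map_eq_zero]
  intro r hr
  set S : ℂ[X] := ∑ m : Fin k, C (r m) * X ^ (m : ℕ) with hSdef
  have hQ : X * S * ∏ i, (X - C (z i)) = 0 := by
    ext n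
    rcases Nat.eq_zero_or_pos n with hn | hn
    · subst hn
      rw [mul_coeff_zero, mul_coeff_zero, coeff_X_zero, zero_mul, zero_mul, coeff_zero]
    rcases le_or_gt n (2 * k) with h2k | h2k
    · obtain ⟨j, rfl⟩ : ∃ j : ℕ, n = j + 1 := ⟨n - 1, by omega⟩
      have hj : j < 2 * k := by omega
      have := congrFun (congrArg WithLp.ofLp hr) ⟨j, hj⟩
      simpa [sparseL] using this
    · rw [coeff_eq_zero_of_natDegree_lt (lt_of_le_of_lt (sparse_natDegree_le hk z r) h2k),
        coeff_zero]
  have hS0 : S = 0 := by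
    have hX : (X : ℂ[X]) ≠ 0 := X_ne_zero
    have hP : (∏ i, (X - C (z i))) ≠ 0 := (monic_prodP z).ne_zero
    rcases mul_eq_zero.mp hQ with h | h
    · rcases mul_eq_zero.mp h with h' | h'
      · exact absurd h' hX
      · exact h'
    · exact absurd h hP
  funext m
  have := sparse_coeff_sum r m
  rw [← hSdef, hS0, coeff_zero] at this
  exact this.symm

lemma sparseL_vanish {k : ℕ} (hk : 0 < k) (z : Fin k → ℂ) (r : Fin k → ℂ) (i : Fin k) :
    ∑ j : Fin (2 * k), (sparseL z r) j * (z i) ^ ((j : ℕ) + 1) = 0 := by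
  set Q : ℂ[X] := X * (∑ m : Fin k, C (r m) * X ^ (m : ℕ)) * ∏ i, (X - C (z i)) with hQdef
  have heval : Q.eval (z i) = 0 := by
    rw [hQdef, eval_mul, eval_prod,
      Finset.prod_eq_zero (mem_univ i) (by simp : eval (z i) (X - C (z i)) = 0), mul_zero]
  have hdeg : Q.natDegree < 2 * k + 1 := Nat.lt_succ_of_le (sparse_natDegree_le hk z r)
  have hsum : Q.eval (z i) = ∑ n ∈ Finset.range (2 * k + 1), Q.coeff n * (z i) ^ n :=
    eval_eq_sum_range' hdeg (z i)
  rw [Finset.sum_range_succ'] at hsum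
  have hc0 : Q.coeff 0 = 0 := by
    rw [hQdef, mul_coeff_zero, mul_coeff_zero, coeff_X_zero, zero_mul, zero_mul]
  rw [hc0, zero_mul, add_zero] at hsum
  calc ∑ j : Fin (2 * k), (sparseL z r) j * (z i) ^ ((j : ℕ) + 1)
      = ∑ j : Fin (2 * k), Q.coeff ((j : ℕ) + 1) * (z i) ^ ((j : ℕ) + 1) := rfl
    _ = ∑ n ∈ Finset.range (2 * k), Q.coeff (n + 1) * (z i) ^ (n + 1) :=
        Fin.sum_univ_eq_sum_range (fun j => Q.coeff (j + 1) * (z i) ^ (j + 1)) (2 * k)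
    _ = 0 := by rw [← hsum, heval]

/-! Auxiliary: reindexing the punctured window into the two-sided sums. -/

lemma sum_shift_le {k : ℕ} (g : ℤ → ℝ) (hg : ∀ n, 0 ≤ g n) (l : Fin (2 * k)) :
    ∑ j ∈ Finset.univ.erase l, g ((j : ℤ) - (l : ℤ)) ≤
      (∑ i ∈ Finset.Icc 1 (2 * k), g (i : ℤ)) + ∑ i ∈ Finset.Icc 1 (2 * k), g (-(i : ℤ)) := by
  classical
  set e : Fin (2 * k) → ℤ := fun j => (j : ℤ) - (l : ℤ) with he
  have hsum : ∑ j ∈ Finset.univ.erase l, g (e j)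
      = ∑ n ∈ (Finset.univ.erase l).image e, g n := by
    rw [Finset.sum_image]
    intro x _ y _ hxy
    have : (x : ℤ) = (y : ℤ) := by simpa [he] using hxy
    exact Fin.ext (by exact_mod_cast this)
  set T : Finset ℤ := ((Finset.Icc 1 (2 * k)).image (fun i : ℕ => (i : ℤ))) ∪
      ((Finset.Icc 1 (2 * k)).image (fun i : ℕ => -(i : ℤ))) with hT
  have hsub : (Finset.univ.erase l).image e ⊆ T := by
    intro n hn
    obtain ⟨j, hj, rfl⟩ := Finset.mem_image.mp hn
    have hjl : j ≠ l := Finset.ne_of_mem_erase hj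
    have hjlt : (j : ℕ) < 2 * k := j.isLt
    have hllt : (l : ℕ) < 2 * k := l.isLt
    have hne : (j : ℤ) ≠ (l : ℤ) := by
      intro h; exact hjl (Fin.ext (by exact_mod_cast h))
    rw [hT, Finset.mem_union]
    rcases lt_or_gt_of_ne hne with h | h
    · right
      refine Finset.mem_image.mpr ⟨((l : ℤ) - (j : ℤ)).toNat, ?_, ?_⟩
      · rw [Finset.mem_Icc]; omega
      · simp only [he]; omega
    · left
      refine Finset.mem_image.mpr ⟨((j : ℤ) - (l : ℤ)).toNat, ?_, ?_⟩
      · rw [Finset.mem_Icc]; omega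
      · simp only [he]; omega
  have h1 : ∑ n ∈ (Finset.univ.erase l).image e, g n ≤ ∑ n ∈ T, g n :=
    Finset.sum_le_sum_of_subset_of_nonneg hsub (fun n _ _ => hg n)
  have hdisj : Disjoint ((Finset.Icc 1 (2 * k)).image (fun i : ℕ => (i : ℤ)))
      ((Finset.Icc 1 (2 * k)).image (fun i : ℕ => -(i : ℤ))) := by
    rw [Finset.disjoint_left]
    intro n hn hn'
    obtain ⟨a, ha, rfl⟩ := Finset.mem_image.mp hn
    obtain ⟨b, hb, hba⟩ := Finset.mem_image.mp hn'
    rw [Finset.mem_Icc] at ha hb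
    omega
  have h2 : ∑ n ∈ T, g n = (∑ i ∈ Finset.Icc 1 (2 * k), g (i : ℤ))
      + ∑ i ∈ Finset.Icc 1 (2 * k), g (-(i : ℤ)) := by
    rw [hT, Finset.sum_union hdisj]
    congr 1
    · rw [Finset.sum_image (fun x _ y _ h => by exact_mod_cast h)]
    · rw [Finset.sum_image (fun x _ y _ h => by omega)]
  calc ∑ j ∈ Finset.univ.erase l, g ((j : ℤ) - (l : ℤ))
      = ∑ n ∈ (Finset.univ.erase l).image e, g n := hsum
    _ ≤ ∑ n ∈ T, g n := h1
    _ = _ := h2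

/-- a universal constant `C` such that every k-sparse exponential
sum satisfies `|f t|² ≤ C (∑_{i=1}^{2k} |f(t+iΔ)|² + ∑_{i=1}^{2k} |f(t−iΔ)|²)`. -/
theorem stmt_9 :
    ∃ C : ℝ, 0 < C ∧ ∀ (k : ℕ) (v : Fin k → ℂ) (fr : Fin k → ℝ) (f : ℝ → ℂ),
      (∀ x : ℝ, f x = ∑ j, v j *
        Complex.exp (2 * (Real.pi : ℂ) * Complex.I * (fr j : ℂ) * (x : ℂ))) →
      ∀ Δ : ℝ, 0 < Δ → ∀ t : ℝ,
        ‖f t‖ ^ 2 ≤ C * ((∑ i ∈ Finset.Icc 1 (2 * k), ‖f (t + (i : ℝ) * Δ)‖ ^ 2) +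
          (∑ i ∈ Finset.Icc 1 (2 * k), ‖f (t - (i : ℝ) * Δ)‖ ^ 2)) := by
  refine ⟨1, one_pos, ?_⟩
  intro k v fr f hf Δ hΔ t
  rw [one_mul]
  rcases Nat.eq_zero_or_pos k with hk0 | hk
  · subst hk0
    have h0 : f t = 0 := by rw [hf t]; simp
    rw [h0, norm_zero]
    have : (0:ℝ) ^ 2 = 0 := by norm_num
    rw [this]
    positivity
  · set z : Fin k → ℂ := fun i =>
      Complex.exp (2 * (Real.pi : ℂ) * Complex.I * (fr i : ℂ) * (Δ : ℂ)) with hz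
    set W := LinearMap.range (sparseL z) with hWdef
    have hn2k : 0 < 2 * k := by omega
    obtain ⟨l, q, s₀, hqW, hsge, hql, hqsum⟩ := exists_good_vector hn2k W
    have hWrank : Module.finrank ℂ W = k := by
      rw [hWdef, LinearMap.finrank_range_of_inj (sparseL_injective hk z)]
      simp
    have hhalf : (1 : ℝ) / 2 ≤ s₀ := by
      refine le_trans (le_of_eq ?_) hsge
      rw [hWrank]
      have hk' : ((k : ℝ)) ≠ 0 := by exact_mod_cast hk.ne'
      push_cast
      field_simp
    have hs_pos : (0 : ℝ) < s₀ := lt_of_lt_of_le (by norm_num) hhalf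
    -- sample identity
    have hsample : ∀ (x : ℝ) (n : ℕ), f (x + (n : ℝ) * Δ)
        = ∑ i, (v i * Complex.exp (2 * (Real.pi : ℂ) * Complex.I * (fr i : ℂ) * (x : ℂ)))
            * z i ^ n := by
      intro x n
      rw [hf]
      refine Finset.sum_congr rfl fun i _ => ?_
      have harg : (2 * (Real.pi : ℂ) * Complex.I * (fr i : ℂ) * ((x + (n : ℝ) * Δ : ℝ) : ℂ))
          = 2 * (Real.pi : ℂ) * Complex.I * (fr i : ℂ) * (x : ℂ)
            + (n : ℂ) * (2 * (Real.pi : ℂ) * Complex.I * (fr i : ℂ) * (Δ : ℂ)) := by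
        push_cast; ring
      rw [harg, Complex.exp_add, Complex.exp_nat_mul]
      simp only [hz]
      ring
    -- vanishing of the window relation at every base point
    have hvan : ∀ x : ℝ, ∑ j : Fin (2 * k), q j * f (x + (((j : ℕ) : ℝ) + 1) * Δ) = 0 := by
      intro x
      obtain ⟨r, hr⟩ := hqW
      calc ∑ j : Fin (2 * k), q j * f (x + (((j : ℕ) : ℝ) + 1) * Δ)
          = ∑ j : Fin (2 * k), ∑ i : Fin k,
              (v i * Complex.exp (2 * (Real.pi : ℂ) * Complex.I * (fr i : ℂ) * (x : ℂ)))
                * (q j * z i ^ ((j : ℕ) + 1)) := by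
            refine Finset.sum_congr rfl fun j _ => ?_
            have hs := hsample x ((j : ℕ) + 1)
            push_cast at hs
            rw [hs, Finset.mul_sum]
            refine Finset.sum_congr rfl fun i _ => by ring
        _ = ∑ i : Fin k, ∑ j : Fin (2 * k),
              (v i * Complex.exp (2 * (Real.pi : ℂ) * Complex.I * (fr i : ℂ) * (x : ℂ)))
                * (q j * z i ^ ((j : ℕ) + 1)) := Finset.sum_comm
        _ = 0 := by
            refine Finset.sum_eq_zero fun i _ => ?_
            rw [← Finset.mul_sum]
            rw [← hr]
            rw [sparseL_vanish hk z r i, mul_zero]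
    -- instantiate at base point t - (l+1)Δ
    set sb : ℝ := t - (((l : ℕ) : ℝ) + 1) * Δ with hsb
    have hA := hvan sb
    rw [← Finset.sum_erase_add _ _ (Finset.mem_univ l)] at hA
    have hts : sb + (((l : ℕ) : ℝ) + 1) * Δ = t := by rw [hsb]; ring
    rw [hts, hql] at hA
    have hs₀ne : ((s₀ : ℂ)) ≠ 0 := Complex.ofReal_ne_zero.mpr (ne_of_gt hs_pos)
    have hft : f t = (∑ j ∈ Finset.univ.erase l,
        -(q j) * f (sb + (((j : ℕ) : ℝ) + 1) * Δ)) / (s₀ : ℂ) := by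
      rw [eq_div_iff hs₀ne]
      have hns : ∑ j ∈ Finset.univ.erase l, -(q j) * f (sb + (((j : ℕ) : ℝ) + 1) * Δ)
          = -∑ j ∈ Finset.univ.erase l, q j * f (sb + (((j : ℕ) : ℝ) + 1) * Δ) := by
        rw [← Finset.sum_neg_distrib]
        exact Finset.sum_congr rfl fun j _ => by ring
      rw [hns]
      linear_combination hA
    -- norm estimate
    have hnorm : ‖f t‖ ≤ (∑ j ∈ Finset.univ.erase l,
        ‖q j‖ * ‖f (sb + (((j : ℕ) : ℝ) + 1) * Δ)‖) / s₀ := by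
      rw [hft, norm_div]
      have hns₀ : ‖((s₀ : ℝ) : ℂ)‖ = s₀ := by
        rw [Complex.norm_real, Real.norm_eq_abs, abs_of_pos hs_pos]
      rw [hns₀]
      gcongr
      refine (norm_sum_le _ _).trans ?_
      refine Finset.sum_le_sum fun j _ => ?_
      rw [norm_mul, norm_neg]
    -- coefficient mass on the punctured window
    have hq_er : ∑ j ∈ Finset.univ.erase l, ‖q j‖ ^ 2 = s₀ - s₀ ^ 2 := by
      have hsplit := Finset.sum_erase_add Finset.univ (fun j => ‖q j‖ ^ 2) (Finset.mem_univ l)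
      simp only at hsplit
      have hql2 : ‖q l‖ ^ 2 = s₀ ^ 2 := by
        rw [hql, Complex.norm_real, Real.norm_eq_abs, abs_of_pos hs_pos]
      rw [hql2, hqsum] at hsplit
      linarith
    set Sf : ℝ := ∑ j ∈ Finset.univ.erase l, ‖f (sb + (((j : ℕ) : ℝ) + 1) * Δ)‖ ^ 2 with hSf
    have hSf0 : (0 : ℝ) ≤ Sf := by positivity
    have hCS := Finset.sum_mul_sq_le_sq_mul_sq (Finset.univ.erase l)
      (fun j => ‖q j‖) (fun j => ‖f (sb + (((j : ℕ) : ℝ) + 1) * Δ)‖)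
    have key : ‖f t‖ ^ 2 ≤ Sf := by
      have h2 : ‖f t‖ ^ 2 ≤ ((∑ j ∈ Finset.univ.erase l,
          ‖q j‖ * ‖f (sb + (((j : ℕ) : ℝ) + 1) * Δ)‖) / s₀) ^ 2 := by
        have hnn : (0:ℝ) ≤ ‖f t‖ := norm_nonneg _
        exact pow_le_pow_left₀ hnn hnorm 2
      have h3 : ((∑ j ∈ Finset.univ.erase l,
          ‖q j‖ * ‖f (sb + (((j : ℕ) : ℝ) + 1) * Δ)‖) / s₀) ^ 2
          ≤ ((s₀ - s₀ ^ 2) * Sf) / s₀ ^ 2 := by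
        rw [div_pow]
        gcongr
        exact hCS.trans (le_of_eq (by rw [hq_er]))
      have h4 : ((s₀ - s₀ ^ 2) * Sf) / s₀ ^ 2 ≤ Sf := by
        rw [div_le_iff₀ (by positivity)]
        have hcoef : s₀ - s₀ ^ 2 ≤ s₀ ^ 2 := by nlinarith [hs_pos, hhalf]
        have hmul := mul_le_mul_of_nonneg_right hcoef hSf0
        linarith
      linarith
    refine key.trans ?_
    set g : ℤ → ℝ := fun n => ‖f (t + (n : ℝ) * Δ)‖ ^ 2 with hg
    have hterm : ∀ j ∈ Finset.univ.erase l,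
        ‖f (sb + (((j : ℕ) : ℝ) + 1) * Δ)‖ ^ 2 = g ((j : ℤ) - (l : ℤ)) := by
      intro j _
      have harg : sb + (((j : ℕ) : ℝ) + 1) * Δ = t + ((((j : ℤ) - (l : ℤ)) : ℤ) : ℝ) * Δ := by
        rw [hsb]; push_cast; ring
      rw [hg, harg]
    rw [hSf, Finset.sum_congr rfl hterm]
    refine (sum_shift_le g (fun n => by positivity) l).trans (le_of_eq ?_)
    have e1 : ∑ i ∈ Finset.Icc 1 (2 * k), g (i : ℤ)
        = ∑ i ∈ Finset.Icc 1 (2 * k), ‖f (t + (i : ℝ) * Δ)‖ ^ 2 := by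
      refine Finset.sum_congr rfl fun i _ => ?_
      simp only [hg]
      have harg : t + (((i : ℤ) : ℤ) : ℝ) * Δ = t + (i : ℝ) * Δ := by push_cast; ring
      rw [harg]
    have e2 : ∑ i ∈ Finset.Icc 1 (2 * k), g (-(i : ℤ))
        = ∑ i ∈ Finset.Icc 1 (2 * k), ‖f (t - (i : ℝ) * Δ)‖ ^ 2 := by
      refine Finset.sum_congr rfl fun i _ => ?_
      simp only [hg]
      have harg : t + ((-(i : ℤ) : ℤ) : ℝ) * Δ = t - (i : ℝ) * Δ := by push_cast; ring
      rw [harg]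
    rw [e1, e2]
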